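/- arXiv:math/0204071 — 4 statements merged into one kernel-verified Lean document; each statement's English description precedes it below -/
import Mathlib

section
/- Let G be a group and N a normal subgroup of G. Suppose that neither N nor the quotient group G/N admits a surjective group homomorphism onto ℱ_∞ (the free group on a countably infinite set of generators). Then G does not admit a surjective group homomorphism onto ℱ_∞. -/
open FreeGroup

/-- A word is its own reduction iff it has no adjacent cancelling pair. -/
private lemma chain'_of_reduce_eq_self {α : Type*} [DecidableEq α] :
    ∀ L : List (α × Bool), FreeGroup.reduce L = L →
      L.Chain' (fun a b => ¬(a.1 = b.1 ∧ a.2 = !b.2))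
  | [], _ => List.isChain_nil
  | [a], _ => List.isChain_singleton a
  | a :: b :: tl, h => by
    rw [FreeGroup.reduce.cons] at h
    rcases hL : FreeGroup.reduce (b :: tl) with _ | ⟨hd, tl2⟩
    · rw [hL] at h
      change [a] = a :: b :: tl at h
      simp at h
    · rw [hL] at h
      have hlen : (FreeGroup.reduce (b :: tl)).length ≤ (b :: tl).length :=
        FreeGroup.Red.length_le (FreeGroup.reduce.red)
      rw [hL] at hlen
      change (if a.1 = hd.1 ∧ a.2 = !hd.2 then tl2 else a :: hd :: tl2) = a :: b :: tl at h
      split_ifs at h with hc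
      · -- h : tl2 = a :: b :: tl, impossible by length
        have := congrArg List.length h
        simp at this hlen
        omega
      · -- h : a :: hd :: tl2 = a :: b :: tl
        have hhd : hd = b := by injection h with _ h2; injection h2 with h3 _
        have htl : tl2 = tl := by injection h with _ h2; injection h2 with _ h4
        rw [hhd, htl] at hL
        rw [hhd] at hc
        have ih := chain'_of_reduce_eq_self (b :: tl) hL
        exact List.isChain_cons_cons.2 ⟨hc, ih⟩

private lemma reduce_eq_self_of_chain' {α : Type*} [DecidableEq α] :
    ∀ L : List (α × Bool),
      L.Chain' (fun a b => ¬(a.1 = b.1 ∧ a.2 = !b.2)) → FreeGroup.reduce L = L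
  | [], _ => rfl
  | [a], _ => FreeGroup.reduce_singleton a
  | a :: b :: tl, h => by
    obtain ⟨hab, h'⟩ := List.isChain_cons_cons.1 h
    have ih := reduce_eq_self_of_chain' (b :: tl) h'
    rw [FreeGroup.reduce.cons, ih]
    change (if a.1 = b.1 ∧ a.2 = !b.2 then tl else a :: b :: tl) = a :: b :: tl
    rw [if_neg hab]

/-- The subgroup of `FreeGroup ℕ` of elements whose reduced word only uses letters `< n`. -/
private def lettersLt (n : ℕ) : Subgroup (FreeGroup ℕ) where
  carrier := {x | ∀ p ∈ x.toWord, p.1 < n}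
  one_mem' := by simp [FreeGroup.toWord_one]
  mul_mem' := by
    intro x y hx hy p hp
    have := (FreeGroup.toWord_mul_sublist x y).subset hp
    rcases List.mem_append.1 this with h | h
    exacts [hx p h, hy p h]
  inv_mem' := by
    intro x hx p hp
    rw [FreeGroup.toWord_inv, FreeGroup.invRev] at hp
    simp only [List.mem_reverse, List.mem_map] at hp
    obtain ⟨q, hq, rfl⟩ := hp
    exact hx q hq

private lemma mem_lettersLt {n : ℕ} {x : FreeGroup ℕ} :
    x ∈ lettersLt n ↔ ∀ p ∈ x.toWord, p.1 < n := Iff.rfl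

/-- **Lemma 2.3.** If a group `G` has a normal subgroup `N` such that neither `N` nor the
quotient `G/N` admits a surjective homomorphism onto the free group `ℱ_∞` on countably many
generators, then `G` does not admit a surjective homomorphism onto `ℱ_∞`. -/
theorem no_surj_onto_free_group_of_normal_of_quotient
    (G : Type*) [Group G] (N : Subgroup G) [N.Normal]
    (hN : ¬ ∃ f : N →* FreeGroup ℕ, Function.Surjective f)
    (hQ : ¬ ∃ f : G ⧸ N →* FreeGroup ℕ, Function.Surjective f) :
    ¬ ∃ f : G →* FreeGroup ℕ, Function.Surjective f := by
  rintro ⟨f, hf⟩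
  by_cases hker : N ≤ f.ker
  · -- f factors through the quotient
    refine hQ ⟨QuotientGroup.lift N f hker, ?_⟩
    intro z
    obtain ⟨x, rfl⟩ := hf z
    exact ⟨QuotientGroup.mk x, QuotientGroup.lift_mk' N hker x⟩
  · -- the image K of N is a nontrivial normal subgroup of FreeGroup ℕ
    obtain ⟨x0, hx0N, hx0⟩ : ∃ x ∈ N, f x ≠ 1 := by
      simpa [SetLike.le_def, MonoidHom.mem_ker] using hker
    set K : Subgroup (FreeGroup ℕ) := N.map f with hKdef
    have hKnormal : K.Normal := Subgroup.Normal.map ‹N.Normal› f hf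
    have hk0 : f x0 ∈ K := ⟨x0, hx0N, rfl⟩
    haveI : IsFreeGroup K := inferInstance
    rcases finite_or_infinite (IsFreeGroup.Generators K) with hfin | hinf
    · -- K is finitely generated: derive a contradiction
      -- K is generated (as a subgroup) by a finite set S
      have hGroupFG : Group.FG K := by
        rw [Group.fg_iff]
        refine ⟨Set.range (IsFreeGroup.of : IsFreeGroup.Generators K → K), ?_, Set.finite_range _⟩
        have h1 : Set.range (IsFreeGroup.of : IsFreeGroup.Generators K → K)
            = ⇑(IsFreeGroup.mulEquiv K).toMonoidHom '' Set.range FreeGroup.of := by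
          rw [← Set.range_comp]; rfl
        rw [h1, ← MonoidHom.map_closure, FreeGroup.closure_range_of,
          ← MonoidHom.range_eq_map, MonoidHom.range_eq_top]
        exact (IsFreeGroup.mulEquiv K).surjective
      have hKFG : K.FG := (Group.fg_iff_subgroup_fg K).1 hGroupFG
      obtain ⟨S, hScl, hSfin⟩ := (Subgroup.fg_iff K).1 hKFG
      -- choose a letter n larger than all letters appearing in S
      set n : ℕ := hSfin.toFinset.sup (fun w => (w.toWord.map Prod.fst).sum) + 1 with hn
      have hfresh : ∀ w ∈ S, ∀ p ∈ w.toWord, p.1 < n := by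
        intro w hw p hp
        have h1 : p.1 ≤ (w.toWord.map Prod.fst).sum :=
          List.single_le_sum (fun x _ => Nat.zero_le x) _
            (List.mem_map.2 ⟨p, hp, rfl⟩)
        have h2 : (w.toWord.map Prod.fst).sum ≤
            hSfin.toFinset.sup (fun w => (w.toWord.map Prod.fst).sum) :=
          Finset.le_sup (f := fun w => (w.toWord.map Prod.fst).sum) (hSfin.mem_toFinset.2 hw)
        omega
      have hKle : K ≤ lettersLt n := by
        rw [← hScl]
        exact (Subgroup.closure_le _).2 (fun w hw => hfresh w hw)
      -- the conjugate of k₀ := f x0 by the fresh letter n lies in K, contradiction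
      set k₀ : FreeGroup ℕ := f x0 with hk₀def
      set w : List (ℕ × Bool) := k₀.toWord with hwdef
      have hwred : FreeGroup.reduce w = w := FreeGroup.reduce_toWord k₀
      have hwlt : ∀ p ∈ w, p.1 < n := hKle hk0
      have hwne : w ≠ [] := fun h => hx0 (FreeGroup.toWord_eq_nil_iff.1 h)
      have hy : FreeGroup.of n * k₀ * (FreeGroup.of n)⁻¹ ∈ K :=
        hKnormal.conj_mem _ hk0 _
      have hylt := hKle hy
      -- compute the reduced word of the conjugate
      have hyword : (FreeGroup.of n * k₀ * (FreeGroup.of n)⁻¹).toWord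
          = (n, true) :: (w ++ [(n, false)]) := by
        have h1 : FreeGroup.of n * k₀ * (FreeGroup.of n)⁻¹
            = FreeGroup.mk ((n, true) :: (w ++ [(n, false)])) := by
          have : (FreeGroup.of n : FreeGroup ℕ) = FreeGroup.mk [(n, true)] := rfl
          rw [this, ← FreeGroup.mk_toWord (x := k₀), FreeGroup.inv_mk, FreeGroup.mul_mk,
            FreeGroup.mul_mk, ← hwdef]
          simp [FreeGroup.invRev]
        rw [h1, FreeGroup.toWord_mk]
        apply reduce_eq_self_of_chain'
        rcases hw : w with _ | ⟨c, tl⟩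
        · exact absurd hw hwne
        · refine List.isChain_cons.2 ?_
          constructor
          · intro z hz
            simp only [List.cons_append, List.head?_cons, Option.mem_some_iff] at hz
            subst hz
            have : c.1 < n := hwlt c (by simp [hw])
            rintro ⟨h1, -⟩
            omega
          · refine List.IsChain.append ?_ (List.isChain_singleton _) ?_
            · have := chain'_of_reduce_eq_self w hwred
              rwa [hw] at this
            · intro x hxl z hz
              simp only [List.head?_cons, Option.mem_some_iff] at hz
              subst hz
              have hxmem : x ∈ w := by
                rw [hw]; exact List.mem_of_mem_getLast? hxl
              have : x.1 < n := hwlt x hxmem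
              rintro ⟨h1, -⟩
              omega
      have := hylt (n, true) (by rw [hyword]; exact List.mem_cons_self)
      omega
    · -- K has infinitely many generators: build a surjection N →* FreeGroup ℕ
      have hcount : Countable (FreeGroup ℕ) := by
        have hs : Function.Surjective (FreeGroup.mk : List (ℕ × Bool) → FreeGroup ℕ) :=
          fun x => ⟨x.toWord, FreeGroup.mk_toWord⟩
        exact hs.countable
      haveI : Countable K := Subtype.countable
      haveI : Countable (IsFreeGroup.Generators K) := by
        have hinj : Function.Injective (IsFreeGroup.of : IsFreeGroup.Generators K → K) :=
          (IsFreeGroup.mulEquiv K).injective.comp FreeGroup.of_injective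
        exact hinj.countable
      obtain ⟨d⟩ := nonempty_denumerable (IsFreeGroup.Generators K)
      haveI := d
      let e : IsFreeGroup.Generators K ≃ ℕ := Denumerable.eqv _
      let φ : K →* FreeGroup ℕ := IsFreeGroup.lift (fun g => FreeGroup.of (e g))
      have hφ : Function.Surjective φ := by
        rw [← MonoidHom.range_eq_top, eq_top_iff, ← FreeGroup.closure_range_of ℕ,
          Subgroup.closure_le]
        rintro _ ⟨m, rfl⟩
        refine ⟨IsFreeGroup.of (e.symm m), ?_⟩
        show IsFreeGroup.lift (fun g => FreeGroup.of (e g)) (IsFreeGroup.of (e.symm m))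
          = FreeGroup.of m
        rw [IsFreeGroup.lift_of, Equiv.apply_symm_apply]
      exact hN ⟨φ.comp (f.subgroupMap N),
        hφ.comp (f.subgroupMap_surjective N)⟩
end

section
/- Every finitely generated normal subgroup of ℱ_∞, the free group on a countably infinite set of generators, is trivial. -/
private lemma freeGroup_toWord_of_mul (m : ℕ) (y : FreeGroup ℕ)
    (hy : ∀ t, y.toWord ≠ (m, false) :: t) :
    (FreeGroup.of m * y).toWord = (m, true) :: y.toWord := by
  have h1 : FreeGroup.of m * y = FreeGroup.mk ((m, true) :: y.toWord) := by
    have : FreeGroup.mk ([(m, true)] ++ y.toWord)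
        = FreeGroup.mk [(m, true)] * FreeGroup.mk y.toWord := (FreeGroup.mul_mk).symm
    simpa [FreeGroup.mk_toWord, FreeGroup.of] using this.symm
  rw [h1, FreeGroup.toWord_mk, FreeGroup.reduce.cons, FreeGroup.reduce_toWord]
  cases h : y.toWord with
  | nil => rfl
  | cons hd tl =>
    simp only
    rw [if_neg]
    rintro ⟨h1', h2'⟩
    have : hd = (m, false) := by
      have : hd.2 = false := by
        cases hb : hd.2 <;> simp [hb] at h2' ⊢
      exact Prod.ext h1'.symm this
    exact hy tl (by rw [h, this])

/-- Every finitely generated normal subgroup of the free group on countably infinitely many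
generators is trivial. -/
theorem fg_normal_subgroup_of_infinite_free_group_eq_bot
    (N : Subgroup (FreeGroup ℕ)) [N.Normal] (hfg : Group.FG N) :
    N = ⊥ := by
  obtain ⟨S, hSclo, hSfin⟩ := (Subgroup.fg_iff N).mp ((Group.fg_iff_subgroup_fg N).mp hfg)
  -- the set of letters used by generators is finite; pick a fresh letter m
  have hfin : (⋃ s ∈ S, {n : ℕ | ∃ b, (n, b) ∈ FreeGroup.toWord s}).Finite := by
    refine hSfin.biUnion fun s _ => ?_
    have : {n : ℕ | ∃ b, (n, b) ∈ FreeGroup.toWord s}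
        ⊆ ((FreeGroup.toWord s).map Prod.fst).toFinset := by
      rintro n ⟨b, hb⟩
      simp only [List.coe_toFinset, List.mem_map, Set.mem_setOf_eq]
      exact ⟨(n, b), hb, rfl⟩
    exact Set.Finite.subset (List.toFinset _).finite_toSet this
  obtain ⟨m, hm⟩ := hfin.infinite_compl.nonempty
  -- the subgroup of elements avoiding letter m
  let K : Subgroup (FreeGroup ℕ) :=
    { carrier := {x | ∀ p ∈ x.toWord, p.1 ≠ m}
      one_mem' := by simp
      mul_mem' := by
        intro a b ha hb p hp
        rcases List.mem_append.mp ((FreeGroup.toWord_mul_sublist a b).subset hp) with h | h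
        · exact ha p h
        · exact hb p h
      inv_mem' := by
        intro a ha p hp
        rw [FreeGroup.toWord_inv] at hp
        simp only [FreeGroup.invRev, List.mem_reverse, List.mem_map] at hp
        obtain ⟨q, hq, rfl⟩ := hp
        exact ha q hq }
  have hNK : N ≤ K := by
    rw [← hSclo]
    refine (Subgroup.closure_le K).mpr ?_
    intro s hs p hp hpm
    exact hm (Set.mem_biUnion hs ⟨p.2, by obtain ⟨a, b⟩ := p; subst hpm; exact hp⟩)
  by_contra hne
  obtain ⟨⟨w, hwN⟩, hw1⟩ := (Subgroup.ne_bot_iff_exists_ne_one).mp hne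
  have hw1' : w ≠ 1 := by simpa [Subtype.ext_iff] using hw1
  have hwK : ∀ p ∈ w.toWord, p.1 ≠ m := hNK hwN
  have hwinvK : ∀ p ∈ w⁻¹.toWord, p.1 ≠ m := hNK (N.inv_mem hwN)
  -- compute the word of y := w * (of m)⁻¹
  set y : FreeGroup ℕ := w * (FreeGroup.of m)⁻¹ with hy_def
  have hyinv : (y⁻¹).toWord = (m, true) :: w⁻¹.toWord := by
    have : y⁻¹ = FreeGroup.of m * w⁻¹ := by rw [hy_def]; group
    rw [this]
    refine freeGroup_toWord_of_mul m w⁻¹ fun t ht => ?_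
    exact hwinvK (m, false) (ht ▸ List.mem_cons_self) rfl
  have hyw : y.toWord = w.toWord ++ [(m, false)] := by
    have h1 : y.toWord = FreeGroup.invRev ((y⁻¹).toWord) := by
      rw [← FreeGroup.toWord_inv, inv_inv]
    rw [h1, hyinv, FreeGroup.toWord_inv]
    simp [FreeGroup.invRev, Function.comp_def, List.map_reverse]
  -- the conjugate u = of m * w * (of m)⁻¹ lies in N but contains letter m
  have huN : FreeGroup.of m * y ∈ N := by
    rw [hy_def, ← mul_assoc]
    exact Subgroup.Normal.conj_mem ‹N.Normal› w hwN (FreeGroup.of m)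
  have hu : (FreeGroup.of m * y).toWord = (m, true) :: y.toWord := by
    refine freeGroup_toWord_of_mul m y fun t ht => ?_
    rw [hyw] at ht
    cases hLw : w.toWord with
    | nil => exact hw1' (FreeGroup.toWord_eq_nil_iff.mp hLw)
    | cons a l =>
      rw [hLw] at ht
      have : a = (m, false) := by simpa using congrArg (List.head? ·) ht
      exact hwK a (hLw ▸ List.mem_cons_self) (by rw [this])
  exact hNK huN (m, true) (hu ▸ List.mem_cons_self) rfl
end

section
/- Let B be a finitely generated abelian group and ρ : B → ℂ* a nontrivial group homomorphism. Let ℂ_ρ denote the one-dimensional complex representation of B on ℂ in which b ∈ B acts by multiplication by ρ(b). Then the second group cohomology H²(B, ℂ_ρ) vanishes. -/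
/-- The one-dimensional representation of a group `B` on `ℂ` in which `b` acts by
multiplication by `ρ b`. -/
noncomputable def charRep (B : Type) [Group B] (ρ : B →* ℂˣ) : Rep ℂ B :=
  Rep.of
    { toFun := fun b => (ρ b : ℂ) • (LinearMap.id : ℂ →ₗ[ℂ] ℂ)
      map_one' := by simp; rfl
      map_mul' := fun g h => by
        ext
        simp [mul_smul, mul_comm] }

/-- If `B` is a finitely generated abelian group and `ρ : B → ℂ*` is a nontrivial character,
then the second group cohomology of `B` with coefficients in `ℂ_ρ` vanishes. -/
theorem groupCohomology_two_eq_zero_of_nontrivial_char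
    (B : Type) [CommGroup B] [Group.FG B] (ρ : B →* ℂˣ) (hρ : ρ ≠ 1) :
    Subsingleton (groupCohomology (charRep B ρ) 2) := by
  obtain ⟨b, hb⟩ : ∃ b, (ρ b : ℂ) ≠ 1 := by
    by_contra h
    push_neg at h
    exact hρ (MonoidHom.ext fun x => Units.ext (by simpa using h x))
  set c : ℂ := (ρ b : ℂ) with hc
  have hc1 : (1 : ℂ) - c ≠ 0 := sub_ne_zero.2 (Ne.symm hb)
  have key : ∀ f : groupCohomology.cocycles₂ (charRep B ρ),
      (f : B × B → _) ∈ groupCohomology.coboundaries₂ (charRep B ρ) := by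
    intro f
    have F : B × B → ℂ := f
    let F : B × B → ℂ := fun p => f p
    have P : ∀ g h j : B, (ρ g : ℂ) * F (h, j) - F (g * h, j) + F (g, h * j) - F (g, h) = 0 :=
      (groupCohomology.mem_cocycles₂_def (A := charRep B ρ) (f : B × B → _)).1 f.2
    refine ⟨fun x => ((F (x, b) - F (b, x)) / (1 - c) : ℂ), funext fun gh => ?_⟩
    obtain ⟨g, h⟩ := gh
    show (ρ g : ℂ) * ((F (h, b) - F (b, h)) / (1 - c))
        - (F (g * h, b) - F (b, g * h)) / (1 - c)
        + (F (g, b) - F (b, g)) / (1 - c) = F (g, h)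
    have h1 := P g h b
    have h2 := P g b h
    have h3 := P b g h
    rw [mul_comm h b] at h1
    rw [mul_comm g b] at h2
    field_simp
    linear_combination h1 - h2 + h3
  have hH2 : Subsingleton (groupCohomology.H2 (charRep B ρ)) := by
    refine subsingleton_of_forall_eq 0 fun x => ?_
    induction x using groupCohomology.H2_induction_on with
    | h y => exact (groupCohomology.H2π_eq_zero_iff y).2 (key y)
  exact hH2
end

section
/- Let B be a finitely generated abelian group and ρ : B → ℂ* a nontrivial group homomorphism. Let R be a group containing a normal subgroup V together with a group isomorphism ι : (ℂ, +) ≅ V, such that the quotient map π : R → R/V composed with an isomorphism R/V ≅ B gives a surjection q : R → B, and such that conjugation is given by the character ρ: for all r ∈ R and z ∈ ℂ, r·ι(z)·r⁻¹ = ι(ρ(q(r))·z). Then the extension splits: there exists a group homomorphism s : B → R with q ∘ s = id_B; consequently R is isomorphic to the semidirect product ℂ ⋊_ρ B with multiplication (v₁, g₁)·(v₂, g₂) = (v₁ + ρ(g₁)·v₂, g₁·g₂). -/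
/-- The action of `B` on the additive group `ℂ` (written multiplicatively) in which
`b ∈ B` acts by multiplication by `ρ b`. -/
noncomputable def charAut (B : Type) [Group B] (ρ : B →* ℂˣ) : B →* MulAut (Multiplicative ℂ) where
  toFun b := AddEquiv.toMultiplicative ((DistribMulAction.toAddAut ℂˣ ℂ) (ρ b))
  map_one' := by ext x; simp
  map_mul' g h := by ext x; simp [mul_smul]

/-- Let `B` be a finitely generated abelian group and `ρ : B → ℂ*` a nontrivial character.
If `R` is an extension of `B` by the additive group `ℂ` in which conjugation acts through
`ρ`, then the extension splits, and `R` is isomorphic to the semidirect product `ℂ ⋊_ρ B`. -/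
theorem extension_by_nontrivial_char_splits
    (B : Type) [CommGroup B] [Group.FG B] (ρ : B →* ℂˣ) (hρ : ρ ≠ 1)
    (R : Type) [Group R] (ι : Multiplicative ℂ →* R) (hinj : Function.Injective ι)
    (hnorm : ι.range.Normal)
    (q : R →* B) (hsurj : Function.Surjective q) (hker : q.ker = ι.range)
    (hconj : ∀ (r : R) (z : ℂ),
      r * ι (Multiplicative.ofAdd z) * r⁻¹ = ι (Multiplicative.ofAdd ((ρ (q r) : ℂ) * z))) :
    (∃ s : B →* R, q.comp s = MonoidHom.id B) ∧
      Nonempty (R ≃* (Multiplicative ℂ ⋊[charAut B ρ] B)) := by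
  classical
  obtain ⟨b₀, hb₀⟩ : ∃ b, ρ b ≠ 1 := by
    by_contra h
    push_neg at h
    exact hρ (MonoidHom.ext fun b => h b)
  obtain ⟨t, ht⟩ := hsurj b₀
  have hlam1 : (ρ b₀ : ℂ) ≠ 1 := fun h => hb₀ (Units.ext h)
  have hsub : (1 : ℂ) - (ρ b₀ : ℂ) ≠ 0 := sub_ne_zero.mpr (Ne.symm hlam1)
  have hq1 : ∀ z : Multiplicative ℂ, q (ι z) = 1 := fun z => by
    have : ι z ∈ q.ker := hker ▸ ⟨z, rfl⟩
    exact this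
  have hconj' : ∀ (r : R) (z : ℂ),
      r * ι (Multiplicative.ofAdd z) = ι (Multiplicative.ofAdd ((ρ (q r) : ℂ) * z)) * r := by
    intro r z
    calc r * ι (Multiplicative.ofAdd z)
        = r * ι (Multiplicative.ofAdd z) * r⁻¹ * r := by
          rw [inv_mul_cancel_right]
      _ = ι (Multiplicative.ofAdd ((ρ (q r) : ℂ) * z)) * r := by rw [hconj r z]
  -- key: unique t-fixed element in each fiber
  have key : ∀ g : B, ∃! x : R, q x = g ∧ t * x = x * t := by
    intro g
    obtain ⟨x₀, hx₀⟩ := hsurj g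
    have hc : t * x₀ * t⁻¹ * x₀⁻¹ ∈ ι.range := by
      rw [← hker]
      have : q (t * x₀ * t⁻¹ * x₀⁻¹) = 1 := by
        simp only [map_mul, map_inv, ht, hx₀]
        rw [mul_comm b₀ g]
        group
      exact this
    obtain ⟨zc, hzc⟩ := hc
    set c : ℂ := Multiplicative.toAdd zc with hcdef
    have hzc' : t * x₀ = ι (Multiplicative.ofAdd c) * x₀ * t := by
      have h0 : Multiplicative.ofAdd c = zc := rfl
      rw [h0, hzc, inv_mul_cancel_right, mul_assoc, inv_mul_cancel, mul_one]
    set w : ℂ := c / (1 - (ρ b₀ : ℂ)) with hwdef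
    have hweq : (ρ b₀ : ℂ) * w + c = w := by
      rw [hwdef]
      field_simp
      ring
    set x : R := ι (Multiplicative.ofAdd w) * x₀ with hxdef
    have hxq : q x = g := by rw [hxdef, map_mul, hq1, one_mul, hx₀]
    have hxt : t * x = x * t := by
      calc t * x = t * ι (Multiplicative.ofAdd w) * x₀ := by rw [hxdef, mul_assoc]
        _ = ι (Multiplicative.ofAdd ((ρ b₀ : ℂ) * w)) * (t * x₀) := by
            rw [hconj' t w, ht, mul_assoc]
        _ = ι (Multiplicative.ofAdd ((ρ b₀ : ℂ) * w)) * (ι (Multiplicative.ofAdd c) * x₀ * t) := by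
            rw [hzc']
        _ = ι (Multiplicative.ofAdd ((ρ b₀ : ℂ) * w) * Multiplicative.ofAdd c) * x₀ * t := by
            rw [MonoidHom.map_mul ι (Multiplicative.ofAdd ((ρ b₀ : ℂ) * w))
              (Multiplicative.ofAdd c)]
            simp only [mul_assoc]
        _ = x * t := by rw [← ofAdd_add, hweq, hxdef]
    refine ⟨x, ⟨hxq, hxt⟩, ?_⟩
    rintro y ⟨hy1, hy2⟩
    have hmem : y * x⁻¹ ∈ ι.range := by
      rw [← hker]
      have : q (y * x⁻¹) = 1 := by
        rw [map_mul, map_inv, hy1, hxq, mul_inv_cancel]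
      exact this
    obtain ⟨u, hu⟩ := hmem
    have hyx : y = ι u * x := by rw [hu, inv_mul_cancel_right]
    have hcomm : t * ι u = ι u * t := by
      have h1 : t * ι u * x = ι u * t * x := by
        calc t * ι u * x = t * y := by rw [hyx, mul_assoc]
          _ = y * t := hy2
          _ = ι u * (x * t) := by rw [hyx, mul_assoc]
          _ = ι u * (t * x) := by rw [hxt]
          _ = ι u * t * x := by rw [mul_assoc]
      exact mul_right_cancel h1
    have hou : Multiplicative.ofAdd (Multiplicative.toAdd u) = u := rfl
    have h5 := hconj t (Multiplicative.toAdd u)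
    rw [ht, hou] at h5
    have h6 : ι u = ι (Multiplicative.ofAdd ((ρ b₀ : ℂ) * Multiplicative.toAdd u)) := by
      rw [← h5, hcomm, mul_inv_cancel_right]
    have h7 : Multiplicative.toAdd u
        = (ρ b₀ : ℂ) * Multiplicative.toAdd u := congrArg Multiplicative.toAdd (hinj h6)
    have h8 : ((1 : ℂ) - (ρ b₀ : ℂ)) * Multiplicative.toAdd u = 0 := by linear_combination h7
    have h9 : Multiplicative.toAdd u = 0 := by
      rcases mul_eq_zero.mp h8 with h | h
      · exact absurd h hsub
      · exact h
    have hu1 : u = 1 := by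
      have := congrArg Multiplicative.ofAdd h9
      simpa using this
    rw [hyx, hu1, map_one, one_mul]
  -- build the section
  have spec : ∀ g : B, q ((key g).choose) = g ∧ t * (key g).choose = (key g).choose * t :=
    fun g => (key g).choose_spec.1
  let s : B →* R :=
    { toFun := fun g => (key g).choose
      map_one' := (key 1).unique ((key 1).choose_spec.1)
        ⟨map_one q, by rw [mul_one, one_mul]⟩
      map_mul' := fun g h => by
        refine (key (g * h)).unique ((key (g * h)).choose_spec.1) ⟨?_, ?_⟩
        · rw [map_mul, (spec g).1, (spec h).1]
        · calc t * ((key g).choose * (key h).choose)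
              = t * (key g).choose * (key h).choose := by rw [mul_assoc]
            _ = (key g).choose * (t * (key h).choose) := by rw [(spec g).2, mul_assoc]
            _ = (key g).choose * (key h).choose * t := by rw [(spec h).2, mul_assoc] }
  have hqs : ∀ g : B, q (s g) = g := fun g => (spec g).1
  refine ⟨⟨s, MonoidHom.ext hqs⟩, ?_⟩
  have hcompat : ∀ g : B, ι.comp ((charAut B ρ g) : Multiplicative ℂ →* Multiplicative ℂ)
      = (MulAut.conj (s g)).toMonoidHom.comp ι := by
    intro g
    ext z
    have h := hconj (s g) (Multiplicative.toAdd z)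
    rw [hqs] at h
    show ι ((charAut B ρ) g z) = s g * ι z * (s g)⁻¹
    calc ι ((charAut B ρ) g z)
        = ι (Multiplicative.ofAdd ((ρ g : ℂ) * Multiplicative.toAdd z)) := rfl
      _ = s g * ι (Multiplicative.ofAdd (Multiplicative.toAdd z)) * (s g)⁻¹ := h.symm
      _ = s g * ι z * (s g)⁻¹ := rfl
  let φ : Multiplicative ℂ ⋊[charAut B ρ] B →* R := SemidirectProduct.lift ι s hcompat
  have hφ : ∀ a : Multiplicative ℂ ⋊[charAut B ρ] B, φ a = ι a.left * s a.right :=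
    fun a => rfl
  have hbij : Function.Bijective φ := by
    constructor
    · intro a b hab
      rw [hφ, hφ] at hab
      have h1 : a.right = b.right := by
        have := congrArg q hab
        simpa [map_mul, hq1, hqs] using this
      have h2 : ι a.left = ι b.left := by
        rw [h1] at hab
        exact mul_right_cancel hab
      ext
      · exact congrArg Multiplicative.toAdd (hinj h2)
      · exact h1
    · intro r
      have hmem : r * (s (q r))⁻¹ ∈ ι.range := by
        rw [← hker]
        have : q (r * (s (q r))⁻¹) = 1 := by
          rw [map_mul, map_inv, hqs, mul_inv_cancel]
        exact this
      obtain ⟨z, hz⟩ := hmem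
      refine ⟨⟨z, q r⟩, ?_⟩
      rw [hφ]
      simp only
      rw [hz, inv_mul_cancel_right]
  exact ⟨(MulEquiv.ofBijective φ hbij).symm⟩
end
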